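/- arXiv:1407.3971 — 4 statements merged into one kernel-verified Lean document; each statement's English description precedes it below -/
import Mathlib

section
/- Lower bound on the log-likelihood ratio for the random-effects likelihood: for all u ∈ ℝ, v > 0, μ₀, μ ∈ ℝ and ω₀², ω² > 0, writing θ₀ = (μ₀, ω₀²) and θ = (μ, ω²), one has log f(u, v | θ₀) − log f(u, v | θ) ≥ −(1/2)·{ log(1 + ω²/ω₀²) + |ω² − ω₀²|/ω² } − (1/2)·|ω₀² − ω²|·( u/(1 + ω₀²v) )²·(1 + ω₀²/ω²) − |μ|·|u/(1 + ω₀²v)|·(1 + |ω₀² − ω²|/ω²) − μ₀²v/(2(1 + ω₀²v)) − |μ₀ u/(1 + ω₀²v)|. -/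
/-- The random-effects likelihood
`f(u, v | θ) = (1 + ω²v)^(−1/2) · exp(−(v/(2(1 + ω²v)))·(μ − u/v)²) · exp(u²/(2v))`
for `θ = (μ, ω²)`. -/
noncomputable def randomEffectsLik (u v μ ωsq : ℝ) : ℝ :=
  (1 + ωsq * v) ^ (-(1 : ℝ) / 2) *
    Real.exp (-(v / (2 * (1 + ωsq * v))) * (μ - u / v) ^ 2) *
    Real.exp (u ^ 2 / (2 * v))

lemma logLik (u v μ ωsq : ℝ) (hv : 0 < v) (hω : 0 < ωsq) :
    Real.log (randomEffectsLik u v μ ωsq)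
      = -(1/2) * Real.log (1 + ωsq * v)
        - v / (2 * (1 + ωsq * v)) * (μ - u / v) ^ 2 + u ^ 2 / (2 * v) := by
  have hA : (0:ℝ) < 1 + ωsq * v := by positivity
  unfold randomEffectsLik
  rw [Real.log_mul (by positivity) (Real.exp_ne_zero _),
    Real.log_mul (by positivity) (Real.exp_ne_zero _),
    Real.log_rpow hA, Real.log_exp, Real.log_exp]
  ring

set_option maxHeartbeats 1000000 in
/-- Lower bound on the log-likelihood ratio for the random-effects likelihood. -/
theorem stmt4 (u v μ₀ μ ω₀sq ωsq : ℝ) (hv : 0 < v) (hω₀ : 0 < ω₀sq) (hω : 0 < ωsq) :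
    Real.log (randomEffectsLik u v μ₀ ω₀sq) - Real.log (randomEffectsLik u v μ ωsq) ≥
      -(1 / 2) * (Real.log (1 + ωsq / ω₀sq) + |ωsq - ω₀sq| / ωsq)
        - (1 / 2) * |ω₀sq - ωsq| * (u / (1 + ω₀sq * v)) ^ 2 * (1 + ω₀sq / ωsq)
        - |μ| * |u / (1 + ω₀sq * v)| * (1 + |ω₀sq - ωsq| / ωsq)
        - μ₀ ^ 2 * v / (2 * (1 + ω₀sq * v))
        - |μ₀ * u / (1 + ω₀sq * v)| := by
  rw [logLik u v μ₀ ω₀sq hv hω₀, logLik u v μ ωsq hv hω, abs_sub_comm ωsq ω₀sq]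
  set A0 := 1 + ω₀sq * v with hA0def
  set A := 1 + ωsq * v with hAdef
  set d := |ω₀sq - ωsq| with hddef
  have hA0 : (0:ℝ) < A0 := by rw [hA0def]; positivity
  have hA : (0:ℝ) < A := by rw [hAdef]; positivity
  have hd0 : (0:ℝ) ≤ d := abs_nonneg _
  have hdl : -d ≤ ω₀sq - ωsq := neg_abs_le _
  have hdu : ω₀sq - ωsq ≤ d := le_abs_self _
  have hF1 : A0 * ωsq ≤ A * (ωsq + d) := by
    rw [hA0def, hAdef]
    nlinarith [mul_nonneg (mul_nonneg hω.le hv.le) (by linarith : (0:ℝ) ≤ d - (ω₀sq - ωsq))]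
  have hF2 : A0 * ωsq ≤ A * (ωsq + ω₀sq) := by
    rw [hA0def, hAdef]
    nlinarith [mul_nonneg (mul_nonneg hω.le hω.le) hv.le]
  -- log bound
  have hlogA0A : Real.log A0 - Real.log A ≤ d / ωsq := by
    have h := Real.log_le_sub_one_of_pos (div_pos hA0 hA)
    rw [Real.log_div hA0.ne' hA.ne'] at h
    have h2 : A0 / A - 1 ≤ d / ωsq := by
      rw [div_sub_one hA.ne', div_le_div_iff₀ hA hω]
      nlinarith
    linarith
  have hlog2 : 0 ≤ Real.log (1 + ωsq / ω₀sq) := by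
    apply Real.log_nonneg; have : 0 ≤ ωsq / ω₀sq := by positivity
    linarith
  -- algebraic identity
  have key : -(v / (2 * A0) * (μ₀ - u / v) ^ 2) + v / (2 * A) * (μ - u / v) ^ 2
      = u ^ 2 * (ω₀sq - ωsq) / (2 * A * A0) - μ₀ ^ 2 * v / (2 * A0) + μ₀ * u / A0
        + μ ^ 2 * v / (2 * A) - μ * u / A := by
    rw [hA0def, hAdef]
    field_simp
    ring
  -- E1
  have hE1 : u ^ 2 * (ω₀sq - ωsq) / (2 * A * A0)
      ≥ -(1 / 2) * d * (u / A0) ^ 2 * (1 + ω₀sq / ωsq) := by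
    have e1 : u ^ 2 * (ω₀sq - ωsq) / (2 * A * A0) - (-(1 / 2) * d * (u / A0) ^ 2 * (1 + ω₀sq / ωsq))
        = (u ^ 2 * (ω₀sq - ωsq) * ωsq * A0 + d * u ^ 2 * (ωsq + ω₀sq) * A) / (2 * A * A0 ^ 2 * ωsq) := by
      field_simp
      ring
    have hnum : 0 ≤ u ^ 2 * (ω₀sq - ωsq) * ωsq * A0 + d * u ^ 2 * (ωsq + ω₀sq) * A := by
      nlinarith [mul_nonneg (mul_nonneg hd0 (sq_nonneg u)) (sub_nonneg.2 hF2),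
        mul_nonneg (mul_nonneg (mul_nonneg (by linarith : (0:ℝ) ≤ ω₀sq - ωsq + d) (sq_nonneg u)) hω.le) hA0.le]
    have := div_nonneg hnum (by positivity : (0:ℝ) ≤ 2 * A * A0 ^ 2 * ωsq)
    linarith [e1 ▸ this]
  -- E2
  have hE2 : μ₀ * u / A0 ≥ -|μ₀ * u / A0| := neg_abs_le _
  -- E3
  have hE3 : 0 ≤ μ ^ 2 * v / (2 * A) := by positivity
  -- E4
  have hE4 : -(μ * u / A) ≥ -(|μ| * |u / A0| * (1 + d / ωsq)) := by
    have habs : |u / A0| = |u| / A0 := by rw [abs_div, abs_of_pos hA0]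
    have h4a : μ * u / A ≤ |μ| * |u| / A := by
      gcongr ?_ / A
      calc μ * u ≤ |μ * u| := le_abs_self _
        _ = |μ| * |u| := abs_mul _ _
    have e4 : |μ| * |u| / A0 * (1 + d / ωsq) - |μ| * |u| / A
        = |μ| * |u| * (A * (ωsq + d) - A0 * ωsq) / (A * A0 * ωsq) := by
      field_simp
    have h4b : |μ| * |u| / A ≤ |μ| * |u| / A0 * (1 + d / ωsq) := by
      have hnum : 0 ≤ |μ| * |u| * (A * (ωsq + d) - A0 * ωsq) :=
        mul_nonneg (mul_nonneg (abs_nonneg _) (abs_nonneg _)) (sub_nonneg.2 hF1)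
      have := div_nonneg hnum (by positivity : (0:ℝ) ≤ A * A0 * ωsq)
      linarith [e4 ▸ this]
    rw [habs]
    have : |μ| * (|u| / A0) * (1 + d / ωsq) = |μ| * |u| / A0 * (1 + d / ωsq) := by ring
    rw [this]
    linarith
  linarith [hE1, hE2, hE3, hE4, key, hlogA0A, hlog2]
end

section
/- Integrability of the infimum of the log-likelihood ratio over a rectangle (verification of the entropy condition E_{θ₀} Z(N_θ, X₁) > −∞): Fix θ₀ = (μ₀, ω₀²) with ω₀² > 0, and let ρ be a probability measure on ℝ × (0,∞) such that ∫ (u/(1 + ω₀²v))² dρ(u,v) < ∞ and ∫ |u|/(1 + ω₀²v) dρ(u,v) < ∞. Let N = [μ̲, μ̄] × [ω̲², ω̄²] be a bounded rectangle in ℝ × (0,∞) with ω̲² > 0. Then ∫ inf_{θ∈N} [ log f(u, v | θ₀) − log f(u, v | θ) ] dρ(u,v) > −∞, i.e., the negative part of the function (u,v) ↦ inf_{θ∈N}[log f(u,v|θ₀) − log f(u,v|θ)] is ρ-integrable. -/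
open MeasureTheory

lemma log_randomEffectsLik (u v μ s : ℝ) (hs : 0 < 1 + s * v) :
    Real.log (randomEffectsLik u v μ s)
      = -(1/2) * Real.log (1 + s * v) - v / (2 * (1 + s * v)) * (μ - u / v) ^ 2
        + u ^ 2 / (2 * v) := by
  have h1 : (0:ℝ) < (1 + s * v) ^ (-(1:ℝ) / 2) := Real.rpow_pos_of_pos hs _
  unfold randomEffectsLik
  rw [Real.log_mul (by positivity) (Real.exp_ne_zero _),
      Real.log_mul h1.ne' (Real.exp_ne_zero _),
      Real.log_rpow hs, Real.log_exp, Real.log_exp]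
  ring

lemma measurable_logLik (μ s : ℝ) :
    Measurable (fun p : ℝ × ℝ => Real.log (randomEffectsLik p.1 p.2 μ s)) := by
  apply Real.measurable_log.comp
  unfold randomEffectsLik
  have h1 : Measurable (fun p : ℝ × ℝ => 1 + s * p.2) :=
    measurable_const.add (measurable_snd.const_mul s)
  exact ((h1.pow_const _).mul
      (((measurable_snd.div (h1.const_mul 2)).neg.mul
        ((measurable_const.sub (measurable_fst.div measurable_snd)).pow_const 2)).exp)).mul
    (((measurable_fst.pow_const 2).div (measurable_snd.const_mul 2)).exp)

set_option maxHeartbeats 1000000 in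
lemma key_lb (μ₀ ω₀ μl μh ωl ωh u v μ s : ℝ)
    (hω₀ : 0 < ω₀) (hv : 0 < v) (hωl : 0 < ωl)
    (hs1 : ωl ≤ s) (hs2 : s ≤ ωh) (hm1 : μl ≤ μ) (hm2 : μ ≤ μh) :
    1/2 * Real.log (min 1 (ωl / ω₀)) - μ₀ ^ 2 / (2 * ω₀)
      - (max |μl| |μh| * max 1 (ω₀ / ωl) + |μ₀|) * (|u| / (1 + ω₀ * v))
      - ((ω₀ + ωh) * max 1 (ω₀ / ωl) / 2) * ((u / (1 + ω₀ * v)) ^ 2)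
    ≤ Real.log (randomEffectsLik u v μ₀ ω₀) - Real.log (randomEffectsLik u v μ s) := by
  have hs0 : 0 < s := lt_of_lt_of_le hωl hs1
  have hωh : 0 < ωh := lt_of_lt_of_le hs0 hs2
  have hA : (0:ℝ) < 1 + ω₀ * v := by positivity
  have hB : (0:ℝ) < 1 + s * v := by positivity
  set A := 1 + ω₀ * v with hA_def
  set B := 1 + s * v with hB_def
  set c := min 1 (ωl / ω₀) with hc_def
  set C := max 1 (ω₀ / ωl) with hC_def
  set M := max |μl| |μh| with hM_def
  clear_value A B c C M
  have hc : 0 < c := by rw [hc_def]; exact lt_min one_pos (div_pos hωl hω₀)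
  have hc1 : c ≤ 1 := by rw [hc_def]; exact min_le_left _ _
  have hC0 : (0:ℝ) < C := by rw [hC_def]; exact lt_of_lt_of_le one_pos (le_max_left _ _)
  have hC1 : (1:ℝ) ≤ C := by rw [hC_def]; exact le_max_left _ _
  have hM0 : 0 ≤ M := by rw [hM_def]; exact le_trans (abs_nonneg μl) (le_max_left _ _)
  have hμM : |μ| ≤ M := by rw [hM_def]; exact abs_le_max_abs_abs hm1 hm2
  -- A ≤ C * B
  have hωC : ω₀ ≤ C * ωl := by
    have : ω₀ / ωl ≤ C := by rw [hC_def]; exact le_max_right 1 (ω₀ / ωl)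
    calc ω₀ = (ω₀ / ωl) * ωl := by field_simp
    _ ≤ C * ωl := mul_le_mul_of_nonneg_right this hωl.le
  have hAB : A ≤ C * B := by
    have h1 : ω₀ * v ≤ C * ωl * v := mul_le_mul_of_nonneg_right hωC hv.le
    have h2 : C * ωl * v ≤ C * s * v :=
      mul_le_mul_of_nonneg_right (mul_le_mul_of_nonneg_left hs1 hC0.le) hv.le
    simp only [hA_def, hB_def]
    nlinarith
  -- c * A ≤ B
  have hcω : c * ω₀ ≤ ωl := by
    have : c ≤ ωl / ω₀ := by rw [hc_def]; exact min_le_right 1 (ωl / ω₀)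
    calc c * ω₀ ≤ (ωl / ω₀) * ω₀ := mul_le_mul_of_nonneg_right this hω₀.le
    _ = ωl := by field_simp
  have hcB : c * A ≤ B := by
    have h1 : c * ω₀ * v ≤ ωl * v := mul_le_mul_of_nonneg_right hcω hv.le
    have h2 : ωl * v ≤ s * v := mul_le_mul_of_nonneg_right hs1 hv.le
    simp only [hA_def, hB_def]
    nlinarith
  -- log bound
  have t1 : Real.log c + Real.log A ≤ Real.log B := by
    rw [← Real.log_mul hc.ne' hA.ne']
    exact Real.log_le_log (by positivity) hcB
  -- difference formula
  have hdiff : Real.log (randomEffectsLik u v μ₀ ω₀) - Real.log (randomEffectsLik u v μ s)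
      = 1/2 * (Real.log B - Real.log A)
        + (v * μ ^ 2 - 2 * μ * u) / (2 * B) - (v * μ₀ ^ 2 - 2 * μ₀ * u) / (2 * A)
        + u ^ 2 * (ω₀ - s) / (2 * A * B) := by
    have hA' : (0:ℝ) < 1 + ω₀ * v := hA_def ▸ hA
    have hB' : (0:ℝ) < 1 + s * v := hB_def ▸ hB
    rw [hA_def, hB_def, log_randomEffectsLik u v μ₀ ω₀ hA', log_randomEffectsLik u v μ s hB']
    have h0 : v ≠ 0 := hv.ne'
    have h1 : (1 + ω₀ * v) ≠ 0 := hA'.ne'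
    have h2 : (1 + s * v) ≠ 0 := hB'.ne'
    field_simp
    ring
  -- t2
  have t2 : (-(M * C * |u|)) / A ≤ (v * μ ^ 2 - 2 * μ * u) / (2 * B) := by
    rw [div_le_div_iff₀ hA (by positivity)]
    have hμu : μ * u ≤ M * |u| :=
      le_trans (le_abs_self _) (by rw [abs_mul]; exact mul_le_mul_of_nonneg_right hμM (abs_nonneg u))
    have h1 : μ * u * A ≤ M * |u| * (C * B) :=
      le_trans (mul_le_mul_of_nonneg_right hμu hA.le)
        (mul_le_mul_of_nonneg_left hAB (by positivity))
    have h2 : 0 ≤ v * μ ^ 2 * A := by positivity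
    nlinarith
  -- t3
  have t3 : -(μ₀ ^ 2 / (2 * ω₀)) - |μ₀| * |u| / A ≤ -((v * μ₀ ^ 2 - 2 * μ₀ * u) / (2 * A)) := by
    have a1 : v * μ₀ ^ 2 / (2 * A) ≤ μ₀ ^ 2 / (2 * ω₀) := by
      rw [div_le_div_iff₀ (by positivity) (by positivity)]
      simp only [hA_def]
      nlinarith [sq_nonneg μ₀, mul_nonneg (mul_nonneg (sq_nonneg μ₀) hω₀.le) hv.le]
    have a2 : (-(μ₀ * u)) / A ≤ |μ₀| * |u| / A := by
      rw [div_le_div_iff₀ hA hA]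
      have : -(μ₀ * u) ≤ |μ₀| * |u| := by rw [← abs_mul]; exact neg_le_abs _
      exact mul_le_mul_of_nonneg_right this hA.le
    have e : (v * μ₀ ^ 2 - 2 * μ₀ * u) / (2 * A) = v * μ₀ ^ 2 / (2 * A) + (-(μ₀ * u)) / A := by
      field_simp
      ring
    linarith
  -- t4
  have t4 : (-(((ω₀ + ωh) * C) * u ^ 2)) / (2 * A ^ 2) ≤ u ^ 2 * (ω₀ - s) / (2 * A * B) := by
    rw [div_le_div_iff₀ (by positivity) (by positivity)]
    have h1 : (ω₀ + ωh) * A ≤ (ω₀ + ωh) * (C * B) :=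
      mul_le_mul_of_nonneg_left hAB (by positivity)
    have h2 : -((ω₀ + ωh) * A) ≤ (ω₀ - s) * A := by
      have : 0 ≤ (ω₀ - s + (ω₀ + ωh)) * A := mul_nonneg (by linarith) hA.le
      nlinarith
    have hbr : -((ω₀ + ωh) * (C * B)) ≤ (ω₀ - s) * A := by linarith
    have hmul : u ^ 2 * A * (-((ω₀ + ωh) * (C * B))) ≤ u ^ 2 * A * ((ω₀ - s) * A) :=
      mul_le_mul_of_nonneg_left hbr (by positivity)
    nlinarith [hmul]
  rw [hdiff]
  have e2 : (M * C + |μ₀|) * (|u| / A)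
      = -((-(M * C * |u|)) / A) + |μ₀| * |u| / A := by ring
  have e4 : ((ω₀ + ωh) * C / 2) * ((u / A) ^ 2)
      = -((-(((ω₀ + ωh) * C) * u ^ 2)) / (2 * A ^ 2)) := by ring
  linarith [t1, t2, t3, t4, e2.le, e2.ge, e4.le, e4.ge]

lemma contOn_logLik (u v ωl : ℝ) (hv : 0 < v) (hωl : 0 < ωl) :
    ContinuousOn (fun θ : ℝ × ℝ => Real.log (randomEffectsLik u v θ.1 θ.2))
      {θ : ℝ × ℝ | ωl ≤ θ.2} := by
  have hpos : ∀ θ ∈ {θ : ℝ × ℝ | ωl ≤ θ.2}, (0:ℝ) < 1 + θ.2 * v := by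
    intro θ hθ
    have h2 : 0 < θ.2 := lt_of_lt_of_le hωl hθ
    positivity
  have hg : ContinuousOn (fun θ : ℝ × ℝ =>
      -(1/2) * Real.log (1 + θ.2 * v) - v / (2 * (1 + θ.2 * v)) * (θ.1 - u / v) ^ 2
        + u ^ 2 / (2 * v)) {θ : ℝ × ℝ | ωl ≤ θ.2} := by
    have h1 : Continuous (fun θ : ℝ × ℝ => 1 + θ.2 * v) :=
      continuous_const.add (continuous_snd.mul continuous_const)
    have hlog : ContinuousOn (fun θ : ℝ × ℝ => Real.log (1 + θ.2 * v))
        {θ : ℝ × ℝ | ωl ≤ θ.2} :=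
      ContinuousOn.log h1.continuousOn (fun θ hθ => (hpos θ hθ).ne')
    have hdiv : ContinuousOn (fun θ : ℝ × ℝ => v / (2 * (1 + θ.2 * v)))
        {θ : ℝ × ℝ | ωl ≤ θ.2} :=
      continuousOn_const.div ((continuous_const.mul h1).continuousOn)
        (fun θ hθ => by have := hpos θ hθ; positivity)
    exact ((continuousOn_const.mul hlog).sub
      (hdiv.mul (((continuous_fst.sub continuous_const).pow 2).continuousOn))).add
      continuousOn_const
  exact hg.congr (fun θ hθ => log_randomEffectsLik u v θ.1 θ.2 (hpos θ hθ))

/-- Integrability of the (negative part of the) infimum of the log-likelihood ratio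
over a bounded rectangle `N = [μ̲, μ̄] × [ω̲², ω̄²] ⊆ ℝ × (0,∞)`, for any probability
measure `ρ` on `ℝ × (0,∞)` with the stated square- and first-moment conditions:
`∫ inf_{θ ∈ N} [log f(u,v|θ₀) − log f(u,v|θ)] dρ > −∞`, i.e. the negative part of
the infimum is `ρ`-integrable. -/
theorem stmt5 (μ₀ ω₀sq : ℝ) (hω₀ : 0 < ω₀sq)
    (ρ : Measure (ℝ × ℝ)) [IsProbabilityMeasure ρ]
    (hsupp : ∀ᵐ p ∂ρ, 0 < p.2)
    (hmom2 : Integrable (fun p : ℝ × ℝ => (p.1 / (1 + ω₀sq * p.2)) ^ 2) ρ)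
    (hmom1 : Integrable (fun p : ℝ × ℝ => |p.1| / (1 + ω₀sq * p.2)) ρ)
    (μlo μhi ωlo ωhi : ℝ) (hμ : μlo ≤ μhi) (hωlo : 0 < ωlo) (hω : ωlo ≤ ωhi) :
    Integrable (fun p : ℝ × ℝ =>
      min (⨅ θ : (Set.Icc μlo μhi ×ˢ Set.Icc ωlo ωhi : Set (ℝ × ℝ)),
        (Real.log (randomEffectsLik p.1 p.2 μ₀ ω₀sq) -
          Real.log (randomEffectsLik p.1 p.2 (θ : ℝ × ℝ).1 (θ : ℝ × ℝ).2))) 0) ρ := by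
  classical
  set S : Set (ℝ × ℝ) := Set.Icc μlo μhi ×ˢ Set.Icc ωlo ωhi with hS_def
  haveI hSne : Nonempty ↥S :=
    ⟨⟨(μlo, ωlo), Set.mk_mem_prod (Set.left_mem_Icc.mpr hμ) (Set.left_mem_Icc.mpr hω)⟩⟩
  set c : ℝ := min 1 (ωlo / ω₀sq) with hc_def
  set K₂ : ℝ := max |μlo| |μhi| * max 1 (ω₀sq / ωlo) + |μ₀| with hK2_def
  set K₃ : ℝ := (ω₀sq + ωhi) * max 1 (ω₀sq / ωlo) / 2 with hK3_def
  set c₁ : ℝ := μ₀ ^ 2 / (2 * ω₀sq) - 1/2 * Real.log c with hc1_def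
  set bound : ℝ × ℝ → ℝ := fun p =>
    c₁ + K₂ * (|p.1| / (1 + ω₀sq * p.2)) + K₃ * ((p.1 / (1 + ω₀sq * p.2)) ^ 2) with hbound_def
  clear_value c K₂ K₃ c₁ bound
  have hc : 0 < c := by rw [hc_def]; exact lt_min one_pos (div_pos hωlo hω₀)
  have hcle : c ≤ 1 := by rw [hc_def]; exact min_le_left _ _
  have hK2 : 0 ≤ K₂ := by
    rw [hK2_def]
    have h0 : (0:ℝ) ≤ max |μlo| |μhi| := le_trans (abs_nonneg μlo) (le_max_left _ _)
    have h1 : (0:ℝ) < max 1 (ω₀sq / ωlo) := lt_of_lt_of_le one_pos (le_max_left _ _)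
    positivity
  have hωh : 0 < ωhi := lt_of_lt_of_le hωlo hω
  have hK3 : 0 ≤ K₃ := by
    rw [hK3_def]
    have h1 : (0:ℝ) < max 1 (ω₀sq / ωlo) := lt_of_lt_of_le one_pos (le_max_left _ _)
    positivity
  have hc1 : 0 ≤ c₁ := by
    have hlc : Real.log c ≤ 0 := Real.log_nonpos hc.le hcle
    have : (0:ℝ) ≤ μ₀ ^ 2 / (2 * ω₀sq) := by positivity
    rw [hc1_def]; linarith
  -- the key lower bound
  have hGF : ∀ p : ℝ × ℝ, 0 < p.2 → ∀ θ : ↥S,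
      -(bound p) ≤ Real.log (randomEffectsLik p.1 p.2 μ₀ ω₀sq) -
        Real.log (randomEffectsLik p.1 p.2 (θ : ℝ × ℝ).1 (θ : ℝ × ℝ).2) := by
    intro p hp θ
    have hθ1 := θ.prop.1
    have hθ2 := θ.prop.2
    have hkey := key_lb μ₀ ω₀sq μlo μhi ωlo ωhi p.1 p.2 (θ : ℝ × ℝ).1 (θ : ℝ × ℝ).2
      hω₀ hp hωlo hθ2.1 hθ2.2 hθ1.1 hθ1.2
    refine le_trans (le_of_eq ?_) hkey
    simp only [hbound_def, hc1_def, hK2_def, hK3_def, hc_def]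
    ring
  have hbound_nonneg : ∀ p : ℝ × ℝ, 0 < p.2 → 0 ≤ bound p := by
    intro p hp
    have hA : (0:ℝ) < 1 + ω₀sq * p.2 := by positivity
    have h1 : 0 ≤ |p.1| / (1 + ω₀sq * p.2) := by positivity
    have h2 : 0 ≤ (p.1 / (1 + ω₀sq * p.2)) ^ 2 := sq_nonneg _
    simp only [hbound_def]
    nlinarith [mul_nonneg hK2 h1, mul_nonneg hK3 h2]
  -- integrability of the bound
  have hbound_int : Integrable bound ρ := by
    rw [hbound_def]
    exact (((integrable_const c₁).add (hmom1.const_mul K₂)).add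
      (hmom2.const_mul K₃)).congr (Filter.Eventually.of_forall fun p => rfl)
  -- measurable representative via a dense sequence
  set e : ℕ → ↥S := TopologicalSpace.denseSeq ↥S with he_def
  set h : ℝ × ℝ → ℝ := fun p => min (⨅ n : ℕ,
      (Real.log (randomEffectsLik p.1 p.2 μ₀ ω₀sq) -
        Real.log (randomEffectsLik p.1 p.2 ((e n : ℝ × ℝ)).1 ((e n : ℝ × ℝ)).2))) 0 with hh_def
  have hmeas : Measurable h := by
    apply Measurable.min _ measurable_const
    exact Measurable.iInf (fun n =>
      (measurable_logLik μ₀ ω₀sq).sub (measurable_logLik _ _))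
  have hae : ∀ᵐ p ∂ρ, h p = min (⨅ θ : ↥S,
      (Real.log (randomEffectsLik p.1 p.2 μ₀ ω₀sq) -
        Real.log (randomEffectsLik p.1 p.2 (θ : ℝ × ℝ).1 (θ : ℝ × ℝ).2))) 0 := by
    filter_upwards [hsupp] with p hp
    set Fb : ↥S → ℝ := fun θ => Real.log (randomEffectsLik p.1 p.2 μ₀ ω₀sq) -
      Real.log (randomEffectsLik p.1 p.2 (θ : ℝ × ℝ).1 (θ : ℝ × ℝ).2) with hFb_def
    have hbd : ∀ θ : ↥S, -(bound p) ≤ Fb θ := hGF p hp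
    have hbdd : BddBelow (Set.range Fb) := ⟨-(bound p), by rintro x ⟨θ, rfl⟩; exact hbd θ⟩
    have hbdd2 : BddBelow (Set.range fun n => Fb (e n)) :=
      ⟨-(bound p), by rintro x ⟨n, rfl⟩; exact hbd _⟩
    have hcont : Continuous Fb := by
      have hsub : S ⊆ {θ : ℝ × ℝ | ωlo ≤ θ.2} := fun θ hθ => hθ.2.1
      have hres : Continuous (S.restrict
          (fun θ : ℝ × ℝ => Real.log (randomEffectsLik p.1 p.2 θ.1 θ.2))) :=
        continuousOn_iff_continuous_restrict.mp
          ((contOn_logLik p.1 p.2 ωlo hp hωlo).mono hsub)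
      exact continuous_const.sub hres
    have hEq : (⨅ n : ℕ, Fb (e n)) = ⨅ θ : ↥S, Fb θ := by
      apply le_antisymm
      · refine le_ciInf fun θ => ?_
        have hdθ : (θ : ↥S) ∈ closure (Set.range e) :=
          (TopologicalSpace.denseRange_denseSeq ↥S) θ
        have hclos : Fb θ ∈ closure (Set.range fun n => Fb (e n)) := by
          have h1 := image_closure_subset_closure_image hcont
            (Set.mem_image_of_mem Fb hdθ)
          rw [show (Set.range fun n => Fb (e n)) = Fb '' Set.range e by
            rw [← Set.range_comp]; rfl]
          exact h1
        have hlb : (⨅ n : ℕ, Fb (e n)) ∈ lowerBounds (Set.range fun n => Fb (e n)) :=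
          (isGLB_ciInf hbdd2).1
        rw [← lowerBounds_closure] at hlb
        exact hlb hclos
      · exact le_ciInf fun n => ciInf_le hbdd (e n)
    simp only [hh_def, hFb_def] at hEq ⊢
    rw [hEq]
  -- assemble
  apply Integrable.mono' hbound_int
  · exact hmeas.aestronglyMeasurable.congr hae
  · filter_upwards [hsupp] with p hp
    have h1 : -(bound p) ≤ ⨅ θ : ↥S,
        (Real.log (randomEffectsLik p.1 p.2 μ₀ ω₀sq) -
          Real.log (randomEffectsLik p.1 p.2 (θ : ℝ × ℝ).1 (θ : ℝ × ℝ).2)) :=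
      le_ciInf (hGF p hp)
    have h0 := hbound_nonneg p hp
    rw [Real.norm_eq_abs, abs_le]
    constructor
    · exact le_min h1 (by linarith)
    · exact (min_le_right _ 0).trans h0
end

section
/- Uniform envelope for the log-likelihood ratio over a compact rectangle: Fix θ₀ = (μ₀, ω₀²) with ω₀² > 0 and let B = [μ̲, μ̄] × [ω̲², ω̄²] be a bounded rectangle in ℝ × (0,∞) with ω̲² > 0. Then there exist constants c₀, c₁, c₂ ≥ 0 (depending only on θ₀ and B) such that for all u ∈ ℝ, v > 0 and all θ ∈ B: | log f(u, v | θ₀) − log f(u, v | θ) | ≤ c₀ + c₁·( u/(1 + ω₀²v) )² + c₂·|u|/(1 + ω₀²v). -/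
set_option maxHeartbeats 1000000


lemma log_rel (u v μ ω : ℝ) (hv : 0 < v) (hω : 0 < ω) :
    Real.log (randomEffectsLik u v μ ω) =
      -(Real.log (1 + ω * v)) / 2 - v / (2 * (1 + ω * v)) * (μ - u / v) ^ 2 + u ^ 2 / (2 * v) := by
  have hA : 0 < 1 + ω * v := by positivity
  unfold randomEffectsLik
  rw [Real.log_mul (by positivity) (Real.exp_ne_zero _),
      Real.log_mul (by positivity) (Real.exp_ne_zero _),
      Real.log_rpow hA, Real.log_exp, Real.log_exp]
  ring

/-- Uniform envelope for the log-likelihood ratio over a compact rectangle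
`B = [μ̲, μ̄] × [ω̲², ω̄²] ⊆ ℝ × (0, ∞)`: there are constants `c₀, c₁, c₂ ≥ 0`
(depending only on `θ₀` and `B`) such that for all `u ∈ ℝ`, `v > 0` and `θ ∈ B`,
`|log f(u,v|θ₀) − log f(u,v|θ)| ≤ c₀ + c₁ (u/(1+ω₀²v))² + c₂ |u|/(1+ω₀²v)`. -/
theorem stmt6 (μ₀ ω₀sq : ℝ) (hω₀ : 0 < ω₀sq)
    (μlo μhi ωlo ωhi : ℝ) (hμ : μlo ≤ μhi) (hωlo : 0 < ωlo) (hω : ωlo ≤ ωhi) :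
    ∃ c₀ c₁ c₂ : ℝ, 0 ≤ c₀ ∧ 0 ≤ c₁ ∧ 0 ≤ c₂ ∧
      ∀ u v : ℝ, 0 < v → ∀ θ ∈ Set.Icc μlo μhi ×ˢ Set.Icc ωlo ωhi,
        |Real.log (randomEffectsLik u v μ₀ ω₀sq) - Real.log (randomEffectsLik u v θ.1 θ.2)| ≤
          c₀ + c₁ * (u / (1 + ω₀sq * v)) ^ 2 + c₂ * (|u| / (1 + ω₀sq * v)) := by
  have hωhi : 0 < ωhi := lt_of_lt_of_le hωlo hω
  set M : ℝ := max |μlo| |μhi| with hMdef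
  set r : ℝ := max 1 (ω₀sq / ωlo) with hrdef
  set r' : ℝ := max 1 (ωhi / ω₀sq) with hr'def
  have hM0 : 0 ≤ M := le_trans (abs_nonneg _) (le_max_left _ _)
  have hr1 : (1 : ℝ) ≤ r := le_max_left _ _
  have hr'1 : (1 : ℝ) ≤ r' := le_max_left _ _
  have hr0 : 0 < r := lt_of_lt_of_le one_pos hr1
  have hr'0 : 0 < r' := lt_of_lt_of_le one_pos hr'1
  have hlogr : 0 ≤ Real.log r := Real.log_nonneg hr1
  have hlogr' : 0 ≤ Real.log r' := Real.log_nonneg hr'1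
  have hrω : ω₀sq ≤ r * ωlo := by
    have : ω₀sq / ωlo ≤ r := le_max_right _ _
    rw [div_le_iff₀ hωlo] at this; linarith
  have hr'ω : ωhi ≤ r' * ω₀sq := by
    have : ωhi / ω₀sq ≤ r' := le_max_right _ _
    rw [div_le_iff₀ hω₀] at this; linarith
  refine ⟨(Real.log r + Real.log r') / 2 + M ^ 2 / (2 * ωlo) + μ₀ ^ 2 / (2 * ω₀sq),
    (ω₀sq + ωhi) * r / 2, |μ₀| + M * r, by positivity, by positivity, by positivity, ?_⟩
  intro u v hv θ hθ
  obtain ⟨hμm, hωm⟩ := hθ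
  obtain ⟨hμ1, hμ2⟩ := hμm
  obtain ⟨hω1, hω2⟩ := hωm
  set μ := θ.1
  set ω := θ.2
  have hωpos : 0 < ω := lt_of_lt_of_le hωlo hω1
  have hA : 0 < 1 + ω * v := by positivity
  have hA₀ : 0 < 1 + ω₀sq * v := by positivity
  have hμM : |μ| ≤ M := by
    rw [abs_le]; constructor
    · have : -|μlo| ≤ μlo := neg_abs_le _
      have hl : |μlo| ≤ M := le_max_left _ _
      linarith
    · have : μhi ≤ |μhi| := le_abs_self _
      have hh : |μhi| ≤ M := le_max_right _ _
      linarith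
  -- key comparisons between A and A₀
  have hAle : 1 + ω * v ≤ r' * (1 + ω₀sq * v) := by
    have h1 : ω * v ≤ r' * ω₀sq * v := by nlinarith
    nlinarith
  have hA₀le : 1 + ω₀sq * v ≤ r * (1 + ω * v) := by
    have h0 : ω₀sq ≤ r * ω := le_trans hrω (mul_le_mul_of_nonneg_left hω1 hr0.le)
    have h1 : ω₀sq * v ≤ r * ω * v := mul_le_mul_of_nonneg_right h0 hv.le
    nlinarith
  rw [log_rel u v μ₀ ω₀sq hv hω₀, log_rel u v μ ω hv hωpos]
  have hid : (-(Real.log (1 + ω₀sq * v)) / 2 - v / (2 * (1 + ω₀sq * v)) * (μ₀ - u / v) ^ 2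
        + u ^ 2 / (2 * v))
      - (-(Real.log (1 + ω * v)) / 2 - v / (2 * (1 + ω * v)) * (μ - u / v) ^ 2
        + u ^ 2 / (2 * v)) =
      (Real.log (1 + ω * v) - Real.log (1 + ω₀sq * v)) / 2
      + (v * μ ^ 2 / (2 * (1 + ω * v)) - v * μ₀ ^ 2 / (2 * (1 + ω₀sq * v)))
      + (μ₀ * u / (1 + ω₀sq * v) - μ * u / (1 + ω * v))
      + u ^ 2 * (ω₀sq - ω) / (2 * (1 + ω * v) * (1 + ω₀sq * v)) := by
    field_simp
    ring
  rw [hid]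
  -- bound each of the four pieces
  set L : ℝ := Real.log (1 + ω * v)
  set L₀ : ℝ := Real.log (1 + ω₀sq * v)
  have ha : |(L - L₀) / 2| ≤ (Real.log r + Real.log r') / 2 := by
    have h1 : L ≤ Real.log r' + L₀ := by
      have := Real.log_le_log hA hAle
      rwa [Real.log_mul (ne_of_gt hr'0) (ne_of_gt hA₀)] at this
    have h2 : L₀ ≤ Real.log r + L := by
      have := Real.log_le_log hA₀ hA₀le
      rwa [Real.log_mul (ne_of_gt hr0) (ne_of_gt hA)] at this
    have h3 : |L - L₀| ≤ Real.log r + Real.log r' := by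
      rw [abs_le]; constructor <;> linarith
    rw [abs_div, abs_of_pos (by norm_num : (0:ℝ) < 2)]
    linarith
  have hb : |v * μ ^ 2 / (2 * (1 + ω * v)) - v * μ₀ ^ 2 / (2 * (1 + ω₀sq * v))| ≤
      M ^ 2 / (2 * ωlo) + μ₀ ^ 2 / (2 * ω₀sq) := by
    have hb1 : v * μ ^ 2 / (2 * (1 + ω * v)) ≤ M ^ 2 / (2 * ωlo) := by
      rw [div_le_div_iff₀ (by positivity) (by positivity)]
      obtain ⟨hm1, hm2⟩ := abs_le.mp hμM
      have hμ2M : μ ^ 2 ≤ M ^ 2 := sq_le_sq' hm1 hm2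
      have hvw : v * ωlo ≤ 1 + ω * v := by nlinarith
      have k1 : 0 ≤ v * (M ^ 2 - μ ^ 2) * ωlo :=
        mul_nonneg (mul_nonneg hv.le (sub_nonneg.2 hμ2M)) hωlo.le
      have k2 : 0 ≤ M ^ 2 * (1 + ω * v - v * ωlo) :=
        mul_nonneg (sq_nonneg M) (sub_nonneg.2 hvw)
      nlinarith [k1, k2]
    have hb2 : v * μ₀ ^ 2 / (2 * (1 + ω₀sq * v)) ≤ μ₀ ^ 2 / (2 * ω₀sq) := by
      rw [div_le_div_iff₀ (by positivity) (by positivity)]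
      nlinarith [mul_nonneg (sq_nonneg μ₀) (mul_nonneg hω₀.le hv.le), sq_nonneg μ₀]
    have hb1' : 0 ≤ v * μ ^ 2 / (2 * (1 + ω * v)) := by positivity
    have hb2' : 0 ≤ v * μ₀ ^ 2 / (2 * (1 + ω₀sq * v)) := by positivity
    rw [abs_le]; constructor <;> linarith
  have hc : |μ₀ * u / (1 + ω₀sq * v) - μ * u / (1 + ω * v)| ≤
      (|μ₀| + M * r) * (|u| / (1 + ω₀sq * v)) := by
    have e1 : |μ₀ * u / (1 + ω₀sq * v)| = |μ₀| * (|u| / (1 + ω₀sq * v)) := by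
      rw [abs_div, abs_mul, abs_of_pos hA₀, mul_div_assoc]
    have e2 : |μ * u / (1 + ω * v)| ≤ M * r * (|u| / (1 + ω₀sq * v)) := by
      rw [abs_div, abs_mul, abs_of_pos hA, mul_div_assoc']
      rw [div_le_div_iff₀ hA hA₀]
      have h1 : 0 ≤ |u| * (1 + ω₀sq * v) := by positivity
      have h2 : 0 ≤ M * |u| := by positivity
      nlinarith [mul_le_mul_of_nonneg_right hμM h1,
        mul_le_mul_of_nonneg_left hA₀le h2]
    calc |μ₀ * u / (1 + ω₀sq * v) - μ * u / (1 + ω * v)|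
        ≤ |μ₀ * u / (1 + ω₀sq * v)| + |μ * u / (1 + ω * v)| := abs_sub _ _
      _ ≤ (|μ₀| + M * r) * (|u| / (1 + ω₀sq * v)) := by
          rw [add_mul]; exact add_le_add (le_of_eq e1) e2
  have hd : |u ^ 2 * (ω₀sq - ω) / (2 * (1 + ω * v) * (1 + ω₀sq * v))| ≤
      (ω₀sq + ωhi) * r / 2 * (u / (1 + ω₀sq * v)) ^ 2 := by
    rw [abs_div, abs_mul, abs_of_pos (by positivity : (0:ℝ) < 2 * (1 + ω * v) * (1 + ω₀sq * v)),
      div_pow, mul_div_assoc', div_le_div_iff₀ (by positivity) (by positivity)]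
    have hδ : |ω₀sq - ω| ≤ ω₀sq + ωhi := by
      rw [abs_le]; constructor <;> linarith
    rw [abs_of_nonneg (sq_nonneg u)]
    have h1 : 0 ≤ u ^ 2 * (1 + ω₀sq * v) ^ 2 := by positivity
    have h2 : 0 ≤ (ω₀sq + ωhi) * u ^ 2 * (1 + ω₀sq * v) := by positivity
    nlinarith [mul_le_mul_of_nonneg_right hδ h1,
      mul_le_mul_of_nonneg_left hA₀le h2]
  have habs1 := abs_add_le ((L - L₀) / 2 + (v * μ ^ 2 / (2 * (1 + ω * v)) - v * μ₀ ^ 2 / (2 * (1 + ω₀sq * v))) + (μ₀ * u / (1 + ω₀sq * v) - μ * u / (1 + ω * v))) (u ^ 2 * (ω₀sq - ω) / (2 * (1 + ω * v) * (1 + ω₀sq * v)))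
  have habs2 := abs_add_le ((L - L₀) / 2 + (v * μ ^ 2 / (2 * (1 + ω * v)) - v * μ₀ ^ 2 / (2 * (1 + ω₀sq * v)))) (μ₀ * u / (1 + ω₀sq * v) - μ * u / (1 + ω * v))
  have habs3 := abs_add_le ((L - L₀) / 2) (v * μ ^ 2 / (2 * (1 + ω * v)) - v * μ₀ ^ 2 / (2 * (1 + ω₀sq * v)))
  linarith
end

section
/- Summability of deviation probabilities in the iid case of the explicit SDE random-effects example: Let T > 0, μ₀ ∈ ℝ, A ∈ ℝ, B > 0, and set T_i = T for all i ≥ 1. Let U₁, U₂, … be iid real random variables with common law N(μ₀T, T(1 + T)) on an infinite product probability space with law P. Then for every ε > 0, ∑_{n=1}^∞ P( |μ̂_n − μ₀| > ε ) < ∞. -/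
open MeasureTheory ProbabilityTheory Filter Real
open scoped NNReal ENNReal

namespace Stmt11Aux

lemma tilt (m : ℝ) (v : ℝ≥0) (hv : v ≠ 0) (t x : ℝ) :
    gaussianPDFReal m v x * rexp (t * x)
      = rexp (t * m + t ^ 2 * v / 2) * gaussianPDFReal (m + t * v) v x := by
  have hv' : (0:ℝ) < v := lt_of_le_of_ne v.coe_nonneg (by exact_mod_cast hv.symm)
  have h : -(x - m) ^ 2 / (2 * v) + t * x
      = (t * m + t ^ 2 * v / 2) + -(x - (m + t * v)) ^ 2 / (2 * v) := by
    field_simp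
    ring
  simp only [gaussianPDFReal]
  rw [mul_assoc, ← Real.exp_add, h, Real.exp_add]
  ring

lemma gaussianReal_eq (m : ℝ) (v : ℝ≥0) (hv : v ≠ 0) :
    gaussianReal m v
      = MeasureTheory.volume.withDensity
          (fun x => ((gaussianPDFReal m v x).toNNReal : ℝ≥0∞)) := by
  rw [gaussianReal_of_var_ne_zero m hv]
  rfl

lemma integrable_exp_gaussian (m : ℝ) (v : ℝ≥0) (hv : v ≠ 0) (t : ℝ) :
    Integrable (fun x => rexp (t * x)) (gaussianReal m v) := by
  rw [gaussianReal_eq m v hv,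
    integrable_withDensity_iff_integrable_smul
      ((measurable_gaussianPDFReal m v).real_toNNReal)]
  have : (fun x => (gaussianPDFReal m v x).toNNReal • rexp (t * x))
      = fun x => rexp (t * m + t ^ 2 * v / 2) * gaussianPDFReal (m + t * v) v x := by
    ext x
    rw [NNReal.smul_def, Real.coe_toNNReal _ (gaussianPDFReal_nonneg m v x),
      smul_eq_mul, tilt m v hv t x]
  rw [this]
  exact (integrable_gaussianPDFReal _ _).const_mul _

lemma integral_exp_gaussian' (m : ℝ) (v : ℝ≥0) (hv : v ≠ 0) (t : ℝ) :
    ∫ x, rexp (t * x) ∂(gaussianReal m v) = rexp (t * m + t ^ 2 * v / 2) := by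
  rw [gaussianReal_eq m v hv,
    integral_withDensity_eq_integral_smul
      ((measurable_gaussianPDFReal m v).real_toNNReal)]
  have : (fun x => (gaussianPDFReal m v x).toNNReal • rexp (t * x))
      = fun x => rexp (t * m + t ^ 2 * v / 2) * gaussianPDFReal (m + t * v) v x := by
    ext x
    rw [NNReal.smul_def, Real.coe_toNNReal _ (gaussianPDFReal_nonneg m v x),
      smul_eq_mul, tilt m v hv t x]
  rw [this, MeasureTheory.integral_const_mul, integral_gaussianPDFReal_eq_one _ hv, mul_one]

variable {S : Type*} [MeasurableSpace S] {P : Measure S}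

lemma integrable_exp_of_map (X : S → ℝ) (hX : Measurable X) (m : ℝ) (v : ℝ≥0) (hv : v ≠ 0)
    (h : Measure.map X P = gaussianReal m v) (t : ℝ) :
    Integrable (fun s => rexp (t * X s)) P := by
  have hg : AEStronglyMeasurable (fun x => rexp (t * x)) (Measure.map X P) :=
    (Real.continuous_exp.comp (continuous_const.mul continuous_id)).aestronglyMeasurable
  have := (integrable_map_measure hg hX.aemeasurable).mp
    (by rw [h]; exact integrable_exp_gaussian m v hv t)
  exact this

lemma mgf_of_map (X : S → ℝ) (hX : Measurable X) (m : ℝ) (v : ℝ≥0) (hv : v ≠ 0)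
    (h : Measure.map X P = gaussianReal m v) (t : ℝ) :
    mgf X P t = rexp (t * m + t ^ 2 * v / 2) := by
  have hg : AEStronglyMeasurable (fun x => rexp (t * x)) (Measure.map X P) :=
    (Real.continuous_exp.comp (continuous_const.mul continuous_id)).aestronglyMeasurable
  have : mgf X P t = ∫ x, rexp (t * x) ∂(Measure.map X P) :=
    (MeasureTheory.integral_map hX.aemeasurable hg).symm
  rw [this, h, integral_exp_gaussian' m v hv t]

end Stmt11Aux

/-- The posterior mean `μ̂_n` in the explicit SDE random-effects example. -/
noncomputable def muHat (n : ℕ) (U T : ℕ → ℝ) (A B : ℝ) : ℝ :=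
  ((∑ i ∈ Finset.range n, U i / (1 + T i)) + A / B ^ 2) /
    ((∑ i ∈ Finset.range n, T i / (1 + T i)) + 1 / B ^ 2)

/-- Summability of deviation probabilities in the iid case (`T_i = T`) of the explicit
SDE random-effects example: if `U₁, U₂, …` are iid `N(μ₀ T, T(1 + T))`, then for every
`ε > 0`, `∑_{n=1}^∞ P(|μ̂_n − μ₀| > ε) < ∞`. -/
theorem stmt11 {S : Type*} [MeasurableSpace S] (P : Measure S) [IsProbabilityMeasure P]
    (T μ₀ A B : ℝ) (hT : 0 < T) (hB : 0 < B)
    (U : ℕ → S → ℝ) (hUmeas : ∀ i, Measurable (U i))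
    (hUindep : iIndepFun U P)
    (hUdist : ∀ i, Measure.map (U i) P = gaussianReal (μ₀ * T) (T * (1 + T)).toNNReal) :
    ∀ ε > 0,
      Summable (fun n : ℕ =>
        (P {s | ε < |muHat n (fun i => U i s) (fun _ => T) A B - μ₀|}).toReal) := by
  intro ε hε
  have h1T : (0:ℝ) < 1 + T := by linarith
  have hB2 : (0:ℝ) < B ^ 2 := by positivity
  have hvpos : (0:ℝ) < T * (1 + T) := by positivity
  set v : ℝ≥0 := (T * (1 + T)).toNNReal with hv_def
  have hv : v ≠ 0 := by
    simp only [hv_def, ne_eq, Real.toNNReal_eq_zero, not_le]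
    exact hvpos
  have hvR : (v : ℝ) = T * (1 + T) := Real.coe_toNNReal _ hvpos.le
  set m : ℝ := μ₀ * T with hm_def
  -- integrability and mgf of partial sums
  have hint : ∀ (t : ℝ) (n : ℕ),
      Integrable (fun s => rexp (t * (∑ i ∈ Finset.range n, U i) s)) P := fun t n =>
    hUindep.integrable_exp_mul_sum hUmeas
      (fun i _ => Stmt11Aux.integrable_exp_of_map (U i) (hUmeas i) m v hv (hUdist i) t)
  have hmgf : ∀ (t : ℝ) (n : ℕ),
      mgf (∑ i ∈ Finset.range n, U i) P t = rexp (n * (t * m + t ^ 2 * v / 2)) := by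
    intro t n
    rw [hUindep.mgf_sum hUmeas (Finset.range n),
      Finset.prod_congr rfl
        (fun i _ => Stmt11Aux.mgf_of_map (U i) (hUmeas i) m v hv (hUdist i) t),
      Finset.prod_const, Finset.card_range, ← Real.exp_nat_mul]
  set t0 : ℝ := ε * T / (T * (1 + T)) with ht0_def
  have ht0 : 0 < t0 := by positivity
  set K : ℝ := (1 + T) * (μ₀ - A) / B ^ 2 + ε * (1 + T) / B ^ 2 with hK_def
  set K' : ℝ := (1 + T) * (μ₀ - A) / B ^ 2 - ε * (1 + T) / B ^ 2 with hK'_def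
  set r : ℝ := rexp (-(ε ^ 2 * T ^ 2 / (2 * (T * (1 + T))))) with hr_def
  have hr0 : 0 ≤ r := (Real.exp_pos _).le
  have hr1 : r < 1 := by
    rw [hr_def, Real.exp_lt_one_iff]
    have : 0 < ε ^ 2 * T ^ 2 / (2 * (T * (1 + T))) := by positivity
    linarith
  -- Chernoff bounds
  have hup : ∀ n : ℕ,
      (P {s | (n : ℝ) * m + ε * T * n + K ≤ (∑ i ∈ Finset.range n, U i) s}).toReal
        ≤ rexp (-t0 * K) * r ^ n := by
    intro n
    refine (measure_ge_le_exp_mul_mgf _ ht0.le (hint t0 n)).trans (le_of_eq ?_)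
    rw [hmgf t0 n, ← Real.exp_add, hr_def, ← Real.exp_nat_mul, ← Real.exp_add]
    congr 1
    rw [hvR, ht0_def]
    field_simp
    ring
  have hlow : ∀ n : ℕ,
      (P {s | (∑ i ∈ Finset.range n, U i) s ≤ (n : ℝ) * m - ε * T * n + K'}).toReal
        ≤ rexp (t0 * K') * r ^ n := by
    intro n
    refine (measure_le_le_exp_mul_mgf _ (neg_nonpos.mpr ht0.le) (hint (-t0) n)).trans
      (le_of_eq ?_)
    rw [hmgf (-t0) n, ← Real.exp_add, hr_def, ← Real.exp_nat_mul, ← Real.exp_add]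
    congr 1
    rw [hvR, ht0_def]
    field_simp
    ring
  -- event inclusion
  have hincl : ∀ n : ℕ,
      {s | ε < |muHat n (fun i => U i s) (fun _ => T) A B - μ₀|}
        ⊆ {s | (n : ℝ) * m + ε * T * n + K ≤ (∑ i ∈ Finset.range n, U i) s}
          ∪ {s | (∑ i ∈ Finset.range n, U i) s ≤ (n : ℝ) * m - ε * T * n + K'} := by
    intro n s hs
    simp only [Set.mem_setOf_eq, Set.mem_union, Finset.sum_apply] at hs ⊢
    set W : ℝ := ∑ i ∈ Finset.range n, U i s with hW_def
    set c : ℝ := (n : ℝ) * (T / (1 + T)) + 1 / B ^ 2 with hc_def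
    have hc : 0 < c := by positivity
    have hmu : muHat n (fun i => U i s) (fun _ => T) A B = (W / (1 + T) + A / B ^ 2) / c := by
      rw [muHat, hc_def, hW_def, ← Finset.sum_div, Finset.sum_const, Finset.card_range,
        nsmul_eq_mul]
    rw [hmu] at hs
    have hcc : c * (1 + T) = (n : ℝ) * T + (1 + T) / B ^ 2 := by
      rw [hc_def]
      field_simp
    have hWW : (W / (1 + T) + A / B ^ 2) * (1 + T) = W + A * (1 + T) / B ^ 2 := by
      field_simp
    rcases lt_abs.mp hs with h | h
    · left
      have h2 : (ε + μ₀) * c < W / (1 + T) + A / B ^ 2 := by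
        rw [← lt_div_iff₀ hc]
        linarith
      have h3 := mul_lt_mul_of_pos_right h2 h1T
      rw [mul_assoc, hcc, hWW] at h3
      have keq : (n : ℝ) * m + ε * T * n + K
          = (ε + μ₀) * ((n : ℝ) * T + (1 + T) / B ^ 2) - A * (1 + T) / B ^ 2 := by
        rw [hm_def, hK_def]
        field_simp
        ring
      rw [keq]
      linarith
    · right
      have h2 : W / (1 + T) + A / B ^ 2 < (μ₀ - ε) * c := by
        rw [← div_lt_iff₀ hc]
        linarith
      have h3 := mul_lt_mul_of_pos_right h2 h1T
      rw [mul_assoc, hcc, hWW] at h3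
      have keq : (n : ℝ) * m - ε * T * n + K'
          = (μ₀ - ε) * ((n : ℝ) * T + (1 + T) / B ^ 2) - A * (1 + T) / B ^ 2 := by
        rw [hm_def, hK'_def]
        field_simp
        ring
      rw [keq]
      linarith
  -- assemble
  have hsum : Summable (fun n : ℕ => rexp (-t0 * K) * r ^ n + rexp (t0 * K') * r ^ n) :=
    (((summable_geometric_of_lt_one hr0 hr1).mul_left _).add
      ((summable_geometric_of_lt_one hr0 hr1).mul_left _))
  refine Summable.of_nonneg_of_le (fun n => ENNReal.toReal_nonneg) (fun n => ?_) hsum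
  have hle : P {s | ε < |muHat n (fun i => U i s) (fun _ => T) A B - μ₀|}
      ≤ P {s | (n : ℝ) * m + ε * T * n + K ≤ (∑ i ∈ Finset.range n, U i) s}
        + P {s | (∑ i ∈ Finset.range n, U i) s ≤ (n : ℝ) * m - ε * T * n + K'} :=
    (measure_mono (hincl n)).trans (measure_union_le _ _)
  have hle' := ENNReal.toReal_mono
    (by exact ENNReal.add_ne_top.mpr ⟨measure_ne_top _ _, measure_ne_top _ _⟩) hle
  rw [ENNReal.toReal_add (measure_ne_top _ _) (measure_ne_top _ _)] at hle'
  exact hle'.trans (add_le_add (hup n) (hlow n))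
end
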